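/- arXiv:1502.05122 — 6 statements merged into one kernel-verified Lean document; each statement's English description precedes it below -/
import Mathlib

section
/- Let η : ℤ → ℝ satisfy η(0) = 1, |η(m)| ≤ 1 for all m, η(2m) = η(m) and η(2m+1) = -(η(m)+η(m+1))/2 for all m ∈ ℤ. Define Σ(N) = ∑_{m=-N}^{N} η(m)². Then Σ(4N) ≤ (3/2)·Σ(2N) for all N ≥ 1. -/
open Finset

private lemma tm_sum_split (f : ℤ → ℝ) (a b : ℤ) :
    ∑ m ∈ Icc (2*a) (2*b), f m
      = (∑ m ∈ Icc a b, f (2*m)) + ∑ m ∈ Icc a (b-1), f (2*m+1) := by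
  have hset : Icc (2*a) (2*b)
      = (Icc a b).image (fun m => 2*m) ∪ (Icc a (b-1)).image (fun m => 2*m+1) := by
    ext x
    simp only [mem_union, mem_image, mem_Icc]
    constructor
    · rintro ⟨h1, h2⟩
      rcases Int.even_or_odd x with ⟨k, hk⟩ | ⟨k, hk⟩
      · exact Or.inl ⟨k, ⟨by omega, by omega⟩, by omega⟩
      · exact Or.inr ⟨k, ⟨by omega, by omega⟩, by omega⟩
    · rintro (⟨m, hm, rfl⟩ | ⟨m, hm, rfl⟩) <;> omega
  have hdisj : Disjoint ((Icc a b).image (fun m => 2*m))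
      ((Icc a (b-1)).image (fun m => 2*m+1)) := by
    rw [Finset.disjoint_left]
    rintro x hx hx'
    simp only [mem_image, mem_Icc] at hx hx'
    obtain ⟨m, _, rfl⟩ := hx
    obtain ⟨k, _, hk⟩ := hx'
    omega
  rw [hset, sum_union hdisj, sum_image (by intros x _ y _ h; simp only at h; omega),
    sum_image (by intros x _ y _ h; simp only at h; omega)]

private lemma tm_sum_split' (f : ℤ → ℝ) (a b : ℤ) :
    ∑ m ∈ Icc (2*a) (2*b+1), f m
      = (∑ m ∈ Icc a b, f (2*m)) + ∑ m ∈ Icc a b, f (2*m+1) := by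
  have hset : Icc (2*a) (2*b+1)
      = (Icc a b).image (fun m => 2*m) ∪ (Icc a b).image (fun m => 2*m+1) := by
    ext x
    simp only [mem_union, mem_image, mem_Icc]
    constructor
    · rintro ⟨h1, h2⟩
      rcases Int.even_or_odd x with ⟨k, hk⟩ | ⟨k, hk⟩
      · exact Or.inl ⟨k, ⟨by omega, by omega⟩, by omega⟩
      · exact Or.inr ⟨k, ⟨by omega, by omega⟩, by omega⟩
    · rintro (⟨m, hm, rfl⟩ | ⟨m, hm, rfl⟩) <;> omega
  have hdisj : Disjoint ((Icc a b).image (fun m => 2*m))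
      ((Icc a b).image (fun m => 2*m+1)) := by
    rw [Finset.disjoint_left]
    rintro x hx hx'
    simp only [mem_image, mem_Icc] at hx hx'
    obtain ⟨m, _, rfl⟩ := hx
    obtain ⟨k, _, hk⟩ := hx'
    omega
  rw [hset, sum_union hdisj, sum_image (by intros x _ y _ h; simp only at h; omega),
    sum_image (by intros x _ y _ h; simp only at h; omega)]

private lemma tm_sum_shift (f : ℤ → ℝ) (a b : ℤ) :
    ∑ m ∈ Icc a b, f (m+1) = ∑ m ∈ Icc (a+1) (b+1), f m := by
  have hset : Icc (a+1) (b+1) = (Icc a b).image (fun m => m+1) := by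
    ext x
    simp only [mem_image, mem_Icc]
    constructor
    · rintro ⟨h1, h2⟩
      exact ⟨x-1, ⟨by omega, by omega⟩, by omega⟩
    · rintro ⟨m, hm, rfl⟩; omega
  rw [hset, sum_image (by intros x _ y _ h; simp only at h; omega)]

/-- For the Thue–Morse autocorrelation, `Σ(4N) ≤ (3/2) Σ(2N)` where
`Σ(N) = ∑_{m=-N}^{N} η(m)²`. -/
theorem tm_sigma_ineq (η : ℤ → ℝ)
    (h0 : η 0 = 1)
    (hb : ∀ m : ℤ, |η m| ≤ 1)
    (heven : ∀ m : ℤ, η (2 * m) = η m)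
    (hodd : ∀ m : ℤ, η (2 * m + 1) = -(η m + η (m + 1)) / 2) :
    ∀ N : ℕ, 1 ≤ N →
      (∑ m ∈ Finset.Icc (-(4 * N : ℤ)) (4 * N), (η m) ^ 2) ≤
        (3 / 2) * ∑ m ∈ Finset.Icc (-(2 * N : ℤ)) (2 * N), (η m) ^ 2 := by
  intro N _
  set n : ℤ := (N : ℤ) with hn
  set S2 : ℝ := ∑ m ∈ Icc (-(2 * n)) (2 * n), (η m) ^ 2 with hS2
  -- Split Σ(4N) into even and odd indices
  have hIcc4 : Icc (-(4 * (N:ℤ))) (4 * (N:ℤ)) = Icc (2 * (-(2 * n))) (2 * (2 * n)) := by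
    congr 1 <;> ring
  have hsplit := tm_sum_split (fun m => (η m) ^ 2) (-(2 * n)) (2 * n)
  have heq1 : (∑ m ∈ Icc (-(2*n)) (2*n), (η (2*m)) ^ 2) = S2 := by
    rw [hS2]; exact Finset.sum_congr rfl (fun m _ => by rw [heven])
  -- Odd part
  set I : Finset ℤ := Icc (-(2*n)) (2*n - 1) with hI
  have hodd_term : ∀ m ∈ I, (η (2*m+1)) ^ 2
      = (η m)^2 / 4 + (η (m+1))^2 / 4 + (η m * η (m+1)) / 2 := by
    intro m _
    rw [hodd]; ring
  have hoddsum : (∑ m ∈ I, (η (2*m+1)) ^ 2)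
      = (∑ m ∈ I, (η m)^2) / 4 + (∑ m ∈ I, (η (m+1))^2) / 4
        + (∑ m ∈ I, η m * η (m+1)) / 2 := by
    rw [Finset.sum_congr rfl hodd_term]
    rw [Finset.sum_add_distrib, Finset.sum_add_distrib, Finset.sum_div, Finset.sum_div,
      Finset.sum_div]
  -- A ≤ S2
  have hA : (∑ m ∈ I, (η m)^2) ≤ S2 := by
    apply Finset.sum_le_sum_of_subset_of_nonneg
    · exact Finset.Icc_subset_Icc le_rfl (by omega)
    · intro m _ _; positivity
  -- B ≤ S2
  have hB : (∑ m ∈ I, (η (m+1))^2) ≤ S2 := by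
    rw [hI, tm_sum_shift (fun m => (η m)^2)]
    apply Finset.sum_le_sum_of_subset_of_nonneg
    · exact Finset.Icc_subset_Icc (by omega) (by omega)
    · intro m _ _; positivity
  -- T ≤ 0
  have hT : (∑ m ∈ I, η m * η (m+1)) ≤ 0 := by
    have hI2 : I = Icc (2 * (-n)) (2 * (n-1) + 1) := by
      rw [hI]; congr 1 <;> ring
    rw [hI2, tm_sum_split' (fun m => η m * η (m+1)) (-n) (n-1),
      ← Finset.sum_add_distrib]
    apply Finset.sum_nonpos
    intro k _
    have h1 : η (2*k) = η k := heven k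
    have h2 : η (2*k+1) = -(η k + η (k+1)) / 2 := hodd k
    have h3 : η (2*k+1+1) = η (k+1) := by
      rw [show (2*k+1+1 : ℤ) = 2*(k+1) by ring, heven]
    simp only [h1, h2, h3]
    nlinarith [sq_nonneg (η k + η (k+1))]
  -- Combine
  calc (∑ m ∈ Finset.Icc (-(4 * (N:ℤ))) (4 * N), (η m) ^ 2)
      = S2 + ∑ m ∈ I, (η (2*m+1)) ^ 2 := by
        rw [hIcc4, hsplit, heq1]
    _ ≤ (3 / 2) * S2 := by rw [hoddsum]; linarith
end

section
/- Let η : ℤ → ℝ with |η(m)| ≤ 1 satisfy Σ(4N) ≤ (3/2)·Σ(2N) for all N ≥ 1, where Σ(N) = ∑_{m=-N}^{N} η(m)². Then lim_{N→∞} Σ(N)/N = 0. -/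
open Filter

/-- If `|η| ≤ 1` and `Σ(4N) ≤ (3/2) Σ(2N)` for all `N ≥ 1`, where
`Σ(N) = ∑_{m=-N}^{N} η(m)²`, then `Σ(N)/N → 0`. -/
theorem sigma_sublinear (η : ℤ → ℝ)
    (hb : ∀ m : ℤ, |η m| ≤ 1)
    (S : ℕ → ℝ)
    (hS : ∀ N : ℕ, S N = ∑ m ∈ Finset.Icc (-(N : ℤ)) (N : ℤ), (η m) ^ 2)
    (hrec : ∀ N : ℕ, 1 ≤ N → S (4 * N) ≤ (3 / 2) * S (2 * N)) :
    Tendsto (fun N : ℕ => S N / N) atTop (nhds 0) := by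
  have hnonneg : ∀ N, 0 ≤ S N := by
    intro N
    rw [hS]
    exact Finset.sum_nonneg fun m _ => sq_nonneg _
  have hmono : ∀ M N : ℕ, M ≤ N → S M ≤ S N := by
    intro M N h
    rw [hS, hS]
    apply Finset.sum_le_sum_of_subset_of_nonneg
    · apply Finset.Icc_subset_Icc <;> exact_mod_cast by omega
    · intro m _ _; exact sq_nonneg _
  have hS2 : S 2 ≤ 5 := by
    rw [hS]
    calc ∑ m ∈ Finset.Icc (-(2:ℤ)) (2:ℤ), (η m)^2
        ≤ ∑ m ∈ Finset.Icc (-(2:ℤ)) (2:ℤ), 1 := by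
          apply Finset.sum_le_sum
          intro m _
          exact (sq_le_one_iff_abs_le_one (η m)).mpr (hb m)
      _ = 5 := by simp [Finset.sum_const, Int.card_Icc]
  have hpow : ∀ k : ℕ, S (2 ^ (k + 1)) ≤ 5 * (3 / 2) ^ k := by
    intro k
    induction k with
    | zero => simpa using hS2
    | succ n ih =>
      have h1 : S (2 ^ (n + 2)) ≤ (3 / 2) * S (2 ^ (n + 1)) := by
        have := hrec (2 ^ n) (Nat.one_le_two_pow)
        have e1 : 4 * 2 ^ n = 2 ^ (n + 2) := by ring
        have e2 : 2 * 2 ^ n = 2 ^ (n + 1) := by ring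
        rwa [e1, e2] at this
      calc S (2 ^ (n + 2)) ≤ (3 / 2) * S (2 ^ (n + 1)) := h1
        _ ≤ (3 / 2) * (5 * (3 / 2) ^ n) := by linarith
        _ = 5 * (3 / 2) ^ (n + 1) := by ring
  -- upper bound
  have hub : ∀ N : ℕ, 1 ≤ N → S N / N ≤ 5 * (3 / 4) ^ (Nat.log 2 N) := by
    intro N hN
    set k := Nat.log 2 N with hk
    have hNpos : (0:ℝ) < N := by exact_mod_cast hN
    have h1 : N ≤ 2 ^ (k + 1) := (Nat.lt_pow_succ_log_self one_lt_two N).le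
    have h2 : 2 ^ k ≤ N := Nat.pow_log_le_self 2 (by omega)
    have h3 : S N ≤ 5 * (3 / 2) ^ k := (hmono _ _ h1).trans (hpow k)
    rw [div_le_iff₀ hNpos]
    have h2' : (2:ℝ) ^ k ≤ N := by exact_mod_cast h2
    calc S N ≤ 5 * (3 / 2) ^ k := h3
      _ = 5 * (3 / 4) ^ k * 2 ^ k := by
          rw [mul_assoc, ← mul_pow]; norm_num
      _ ≤ 5 * (3 / 4) ^ k * N := by
          apply mul_le_mul_of_nonneg_left h2'
          positivity
  have hlog : Tendsto (fun N : ℕ => Nat.log 2 N) atTop atTop := by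
    apply tendsto_atTop_atTop.mpr
    intro b
    refine ⟨2 ^ b, fun n hn => ?_⟩
    have hn0 : n ≠ 0 := by have := Nat.one_le_two_pow (n := b); omega
    exact (Nat.le_log_iff_pow_le one_lt_two hn0).mpr hn
  have htend : Tendsto (fun N : ℕ => 5 * (3 / 4 : ℝ) ^ (Nat.log 2 N)) atTop (nhds 0) := by
    have h0 : Tendsto (fun k : ℕ => (3 / 4 : ℝ) ^ k) atTop (nhds 0) :=
      tendsto_pow_atTop_nhds_zero_of_lt_one (by norm_num) (by norm_num)
    have := (h0.comp hlog).const_mul 5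
    simpa using this
  apply squeeze_zero' (g := fun N : ℕ => 5 * (3 / 4 : ℝ) ^ (Nat.log 2 N)) _ _ htend
  · filter_upwards [eventually_ge_atTop 1] with N hN
    exact div_nonneg (hnonneg N) (Nat.cast_nonneg N)
  · filter_upwards [eventually_ge_atTop 1] with N hN
    exact hub N hN
end

section
/- Let η : ℤ → ℝ satisfy η(2m) = η(m) for all m ∈ ℕ and η(1) = -(1/3)·η(0). If lim_{m→∞} η(m) = 0, then η(0) = 0 and consequently η(m) = 0 for all m ≥ 0 whenever η additionally satisfies η(2m+1) = -(η(m)+η(m+1))/2. -/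
open Filter

/-- Vanishing of the absolutely continuous part of the Thue–Morse measure:
if `η(2m)=η(m)` on ℕ, `η(1) = -η(0)/3` and `η(m) → 0`, then `η(0) = 0`; and if in
addition the odd recursion holds, then `η(m) = 0` for all `m ≥ 0`. -/
theorem tm_ac_part_vanishes (η : ℤ → ℝ)
    (heven : ∀ m : ℕ, η (2 * (m : ℤ)) = η (m : ℤ))
    (h1 : η 1 = -(1 / 3) * η 0)
    (hlim : Tendsto (fun m : ℕ => η (m : ℤ)) atTop (nhds 0)) :
    η 0 = 0 ∧
      ((∀ m : ℤ, η (2 * m + 1) = -(η m + η (m + 1)) / 2) →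
        ∀ m : ℕ, η (m : ℤ) = 0) := by
  have pow : ∀ (k m : ℕ), η ((2 ^ k * m : ℕ) : ℤ) = η (m : ℤ) := by
    intro k m
    induction k with
    | zero => simp
    | succ k ih =>
      have : ((2 ^ (k + 1) * m : ℕ) : ℤ) = 2 * ((2 ^ k * m : ℕ) : ℤ) := by
        push_cast; ring
      rw [this, heven, ih]
  have key : ∀ m : ℕ, 1 ≤ m → η (m : ℤ) = 0 := by
    intro m hm
    have htend : Tendsto (fun k : ℕ => 2 ^ k * m) atTop atTop := by
      apply tendsto_atTop_mono (fun k => ?_) tendsto_id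
      calc k ≤ 2 ^ k := Nat.le_of_lt (Nat.lt_two_pow_self (n := k))
        _ = 2 ^ k * 1 := (mul_one _).symm
        _ ≤ 2 ^ k * m := Nat.mul_le_mul_left _ hm
    have := hlim.comp htend
    have heq : (fun k : ℕ => η (((2 ^ k * m : ℕ) : ℤ))) = fun _ => η (m : ℤ) := by
      funext k; exact pow k m
    rw [show ((fun m : ℕ => η (m : ℤ)) ∘ fun k : ℕ => 2 ^ k * m) =
        fun k : ℕ => η (((2 ^ k * m : ℕ) : ℤ)) from rfl, heq] at this
    exact tendsto_nhds_unique tendsto_const_nhds this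
  have h1' : η 1 = 0 := by simpa using key 1 le_rfl
  have h0 : η 0 = 0 := by
    have := h1
    rw [h1'] at this
    linarith
  refine ⟨h0, fun _ m => ?_⟩
  rcases Nat.eq_zero_or_pos m with h | h
  · simp [h, h0]
  · exact key m h
end

section
/- Let η, θ : ℤ → ℝ satisfy η(0) = 1, θ(0) = 0 and the Rudin–Shapiro recursions: η(4m) = ((1+(-1)^m)/2)η(m); η(4m+1) = ((1-(-1)^m)/4)η(m) + ((-1)^m/4)θ(m) - (1/4)θ(m+1); η(4m+2) = 0; η(4m+3) = ((1+(-1)^m)/4)η(m+1) - ((-1)^m/4)θ(m) + (1/4)θ(m+1); θ(4m) = 0; θ(4m+1) = ((1-(-1)^m)/4)η(m) - ((-1)^m/4)θ(m) + (1/4)θ(m+1); θ(4m+2) = ((-1)^m/2)θ(m) + (1/2)θ(m+1); θ(4m+3) = -((1+(-1)^m)/4)η(m+1) - ((-1)^m/4)θ(m) + (1/4)θ(m+1), for all m ∈ ℤ. If η and θ are bounded, then η(m) = δ_{m,0} and θ(m) = 0 for all m ∈ ℤ. -/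
/-- The unique bounded solution of the Rudin–Shapiro autocorrelation recursions with
`η(0)=1`, `θ(0)=0` is `η(m) = δ_{m,0}`, `θ ≡ 0`. -/
theorem rs_autocorrelation_trivial (η θ : ℤ → ℝ)
    (hη0 : η 0 = 1) (hθ0 : θ 0 = 0)
    (hbound : ∃ C : ℝ, ∀ m : ℤ, |η m| ≤ C ∧ |θ m| ≤ C)
    (hrec : ∀ m : ℤ,
      η (4 * m) = ((1 + ((m.negOnePow : ℤ) : ℝ)) / 2) * η m ∧
      η (4 * m + 1) = ((1 - ((m.negOnePow : ℤ) : ℝ)) / 4) * η m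
        + (((m.negOnePow : ℤ) : ℝ) / 4) * θ m - (1 / 4) * θ (m + 1) ∧
      η (4 * m + 2) = 0 ∧
      η (4 * m + 3) = ((1 + ((m.negOnePow : ℤ) : ℝ)) / 4) * η (m + 1)
        - (((m.negOnePow : ℤ) : ℝ) / 4) * θ m + (1 / 4) * θ (m + 1) ∧
      θ (4 * m) = 0 ∧
      θ (4 * m + 1) = ((1 - ((m.negOnePow : ℤ) : ℝ)) / 4) * η m
        - (((m.negOnePow : ℤ) : ℝ) / 4) * θ m + (1 / 4) * θ (m + 1) ∧
      θ (4 * m + 2) = (((m.negOnePow : ℤ) : ℝ) / 2) * θ m + (1 / 2) * θ (m + 1) ∧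
      θ (4 * m + 3) = -((1 + ((m.negOnePow : ℤ) : ℝ)) / 4) * η (m + 1)
        - (((m.negOnePow : ℤ) : ℝ) / 4) * θ m + (1 / 4) * θ (m + 1)) :
    (∀ m : ℤ, η m = if m = 0 then 1 else 0) ∧ (∀ m : ℤ, θ m = 0) := by
  have e0 : ((0:ℤ).negOnePow : ℤ) = 1 := by decide
  have e1 : (((1):ℤ).negOnePow : ℤ) = -1 := by decide
  have en1 : (((-1):ℤ).negOnePow : ℤ) = -1 := by decide
  obtain ⟨H1, H2, H3, H4, H5, H6, H7, H8⟩ := hrec 0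
  obtain ⟨N1, N2, N3, N4, N5, N6, N7, N8⟩ := hrec (-1)
  obtain ⟨P1, P2, P3, P4, P5, P6, P7, P8⟩ := hrec 1
  simp only [e0, e1, en1] at H2 H4 H6 H7 H8 N1 N2 N4 N6 N7 N8 P1 P5
  norm_num at H2 H3 H4 H6 H7 H8 N1 N2 N3 N4 N5 N6 N7 N8 P1 P5
  -- base values
  have hθ1 : θ 1 = 0 := by linarith only [H6, hθ0]
  have hθn1 : θ (-1) = 0 := by linarith only [N8, hθ0]
  have hη1 : η 1 = 0 := by linarith only [H2, hθ0, hθ1]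
  have hηn1 : η (-1) = 0 := by linarith only [N4, hθn1, hθ0]
  have hη2 : η 2 = 0 := H3
  have hηn2 : η (-2) = 0 := N3
  have hθ2 : θ 2 = 0 := by linarith only [H7, hθ0, hθ1]
  have hθn2 : θ (-2) = 0 := by linarith only [N7, hθn1, hθ0]
  have hη3 : η 3 = 0 := by linarith only [H4, hη1, hθ0, hθ1]
  have hηn3 : η (-3) = 0 := by linarith only [N2, hηn1, hθn1, hθ0]
  have hθ3 : θ 3 = 0 := by linarith only [H8, hη1, hθ0, hθ1]
  have hθn3 : θ (-3) = 0 := by linarith only [N6, hηn1, hθn1, hθ0]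
  have hη4 : η 4 = 0 := P1
  have hηn4 : η (-4) = 0 := N1
  have hθ4 : θ 4 = 0 := P5
  have hθn4 : θ (-4) = 0 := N5
  have key : ∀ n : ℕ, ∀ k : ℤ, k.natAbs = n → (k ≠ 0 → η k = 0) ∧ θ k = 0 := by
    intro n
    induction n using Nat.strong_induction_on with
    | _ n ih =>
      intro k hk
      rcases lt_or_ge k.natAbs 5 with hsmall | hbig
      · have hlb : -4 ≤ k := by omega
        have hub : k ≤ 4 := by omega
        interval_cases k
        · exact ⟨fun _ => hηn4, hθn4⟩
        · exact ⟨fun _ => hηn3, hθn3⟩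
        · exact ⟨fun _ => hηn2, hθn2⟩
        · exact ⟨fun _ => hηn1, hθn1⟩
        · exact ⟨fun h => absurd rfl h, hθ0⟩
        · exact ⟨fun _ => hη1, hθ1⟩
        · exact ⟨fun _ => hη2, hθ2⟩
        · exact ⟨fun _ => hη3, hθ3⟩
        · exact ⟨fun _ => hη4, hθ4⟩
      · obtain ⟨r, hr0, hr3, hkeq⟩ : ∃ r : ℤ, 0 ≤ r ∧ r < 4 ∧ k = 4 * (k / 4) + r :=
          ⟨k % 4, Int.emod_nonneg k (by norm_num), Int.emod_lt_of_pos k (by norm_num),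
            by omega⟩
        set m := k / 4 with hm
        have hm0 : m ≠ 0 := by omega
        have hm1 : m + 1 ≠ 0 := by omega
        have hma : m.natAbs < n := by omega
        have hm1a : (m + 1).natAbs < n := by omega
        obtain ⟨ihm, ihmθ⟩ := ih m.natAbs hma m rfl
        obtain ⟨ihm1, ihm1θ⟩ := ih (m + 1).natAbs hm1a (m + 1) rfl
        have hηm : η m = 0 := ihm hm0
        have hηm1 : η (m + 1) = 0 := ihm1 hm1
        obtain ⟨Q1, Q2, Q3, Q4, Q5, Q6, Q7, Q8⟩ := hrec m
        interval_cases r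
        · rw [show k = 4 * m by omega]
          refine ⟨fun _ => ?_, Q5⟩
          rw [Q1, hηm]; ring
        · rw [show k = 4 * m + 1 by omega]
          refine ⟨fun _ => ?_, ?_⟩
          · rw [Q2, hηm, ihmθ, ihm1θ]; ring
          · rw [Q6, hηm, ihmθ, ihm1θ]; ring
        · rw [show k = 4 * m + 2 by omega]
          refine ⟨fun _ => Q3, ?_⟩
          rw [Q7, ihmθ, ihm1θ]; ring
        · rw [show k = 4 * m + 3 by omega]
          refine ⟨fun _ => ?_, ?_⟩
          · rw [Q4, hηm1, ihmθ, ihm1θ]; ring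
          · rw [Q8, hηm1, ihmθ, ihm1θ]; ring
  constructor
  · intro m
    by_cases h : m = 0
    · simp [h, hη0]
    · simp [h, (key m.natAbs m rfl).1 h]
  · intro m
    exact (key m.natAbs m rfl).2
end

section
/- Let (X(n))_{n∈ℤ} be an i.i.d. family of random variables taking values 1 and -1 with probabilities p and 1-p. Then, almost surely, for every m ∈ ℤ, lim_{N→∞} (1/(2N+1)) ∑_{n=-N}^{N} X(n)·X(n-m) = (2p-1)² + 4p(1-p)·δ_{m,0}. -/
open Filter MeasureTheory ProbabilityTheory

lemma bca_aux_ratio (a b : ℝ) :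
    Tendsto (fun N : ℕ => (a * N + b) / (2 * N + 1)) atTop (nhds (a / 2)) := by
  have hinv : Tendsto (fun N : ℕ => ((N : ℝ))⁻¹) atTop (nhds 0) :=
    tendsto_inv_atTop_zero.comp tendsto_natCast_atTop_atTop
  have h : Tendsto (fun N : ℕ => (a + b * ((N:ℝ))⁻¹) / (2 + ((N:ℝ))⁻¹)) atTop
      (nhds ((a + b * 0) / (2 + 0))) := by
    refine Tendsto.div ?_ ?_ (by norm_num)
    · exact tendsto_const_nhds.add (tendsto_const_nhds.mul hinv)
    · exact tendsto_const_nhds.add hinv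
  rw [show (a + b * 0) / (2 + 0) = a / 2 by ring] at h
  refine h.congr' ?_
  filter_upwards [eventually_ge_atTop 1] with N hN
  have hN' : (0:ℝ) < N := by exact_mod_cast hN
  field_simp

lemma bca_count_tendsto (k a : ℕ) (hk : 0 < k) :
    Tendsto (fun N : ℕ => (((N + a) / k : ℕ) : ℝ) / (2 * N + 1)) atTop
      (nhds (1 / (2 * k))) := by
  have hk' : (0:ℝ) < k := by exact_mod_cast hk
  have hlim : ((1:ℝ)/k) / 2 = 1 / (2 * k) := by field_simp
  have hlow := bca_aux_ratio ((1:ℝ)/k) (((a:ℝ) - k)/k)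
  have hhigh := bca_aux_ratio ((1:ℝ)/k) ((a:ℝ)/k)
  rw [hlim] at hlow hhigh
  refine tendsto_of_tendsto_of_tendsto_of_le_of_le hlow hhigh ?_ ?_
  · intro N
    have hden : (0:ℝ) < 2 * N + 1 := by positivity
    have h1 : N + a < k * ((N + a) / k) + k := by
      have := Nat.div_add_mod (N + a) k
      have := Nat.mod_lt (N + a) hk
      omega
    have h1' : (N:ℝ) + a < k * (((N + a) / k : ℕ):ℝ) + k := by exact_mod_cast h1
    rw [div_le_div_iff₀ hden hden]
    have : (1/(k:ℝ) * N + ((a:ℝ) - k)/k) * k ≤ (((N + a) / k : ℕ):ℝ) * k := by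
      rw [mul_comm (((N + a) / k : ℕ):ℝ) (k:ℝ)]
      have : (1/(k:ℝ) * N + ((a:ℝ) - k)/k) * k = (N:ℝ) + a - k := by field_simp; ring
      rw [this]; linarith
    nlinarith [this]
  · intro N
    have hden : (0:ℝ) < 2 * N + 1 := by positivity
    have h1 : k * ((N + a) / k) ≤ N + a := Nat.mul_div_le _ _
    have h1' : (k:ℝ) * (((N + a) / k : ℕ):ℝ) ≤ (N:ℝ) + a := by exact_mod_cast h1
    rw [div_le_div_iff₀ hden hden]
    have h2 : (1/(k:ℝ) * N + (a:ℝ)/k) * k = (N:ℝ) + a := by field_simp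
    nlinarith

lemma bca_sum_range_mod (k : ℕ) (hk : 0 < k) (f : ℕ → ℝ) (M : ℕ) :
    ∑ i ∈ Finset.range M, f i
      = ∑ r ∈ Finset.range k, ∑ j ∈ Finset.range ((M + (k - 1 - r)) / k), f (r + k * j) := by
  rw [Finset.sum_sigma']
  refine Finset.sum_nbij' (fun n => ⟨n % k, n / k⟩) (fun x => x.1 + k * x.2) ?_ ?_ ?_ ?_ ?_
  · intro n hn
    simp only [Finset.mem_range, Finset.mem_sigma] at hn ⊢
    constructor
    · exact Nat.mod_lt _ hk
    · rw [Nat.lt_iff_add_one_le, Nat.le_div_iff_mul_le hk]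
      have h1 : k * (n / k) + n % k = n := Nat.div_add_mod n k
      have h2 : n % k < k := Nat.mod_lt _ hk
      have h3 : (n / k + 1) * k = k * (n / k) + k := by ring
      rw [h3]
      obtain ⟨q, hq⟩ : ∃ q, q = k * (n / k) := ⟨_, rfl⟩
      rw [← hq] at h1 ⊢
      omega
  · intro x hx
    simp only [Finset.mem_range, Finset.mem_sigma] at hx ⊢
    obtain ⟨h1, h2⟩ := hx
    rw [Nat.lt_iff_add_one_le, Nat.le_div_iff_mul_le hk] at h2
    have h3 : (x.2 + 1) * k = k * x.2 + k := by ring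
    rw [h3] at h2
    obtain ⟨q, hq⟩ : ∃ q, q = k * x.2 := ⟨_, rfl⟩
    rw [← hq] at h2 ⊢
    omega
  · intro n hn
    exact Nat.mod_add_div n k
  · intro x hx
    simp only [Finset.mem_range, Finset.mem_sigma] at hx
    obtain ⟨h1, _⟩ := hx
    ext
    · simp [Nat.add_mul_mod_self_left, Nat.mod_eq_of_lt h1]
    · simp [Nat.add_mul_div_left _ _ hk, Nat.div_eq_of_lt h1]
  · intro n hn
    rw [Nat.mod_add_div n k]

lemma bca_icc_split (u : ℤ → ℝ) (N : ℕ) :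
    ∑ n ∈ Finset.Icc (-(N:ℤ)) N, u n
      = (∑ i ∈ Finset.range (N+1), u i) + ∑ j ∈ Finset.range N, u (-(1+j)) := by
  have hsplit : Finset.Icc (-(N:ℤ)) N = Finset.Icc (0:ℤ) N ∪ Finset.Icc (-(N:ℤ)) (-1) := by
    ext n
    simp only [Finset.mem_union, Finset.mem_Icc]
    omega
  have hdisj : Disjoint (Finset.Icc (0:ℤ) N) (Finset.Icc (-(N:ℤ)) (-1)) := by
    rw [Finset.disjoint_left]
    intro n hn hn'
    simp only [Finset.mem_Icc] at hn hn'
    omega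
  rw [hsplit, Finset.sum_union hdisj]
  congr 1
  · refine Finset.sum_nbij' (fun n => n.toNat) (fun i => (i:ℤ)) ?_ ?_ ?_ ?_ ?_
    · intro n hn
      simp only [Finset.mem_Icc] at hn
      simp only [Finset.mem_range]
      omega
    · intro i hi
      simp only [Finset.mem_range] at hi
      simp only [Finset.mem_Icc]
      omega
    · intro n hn
      simp only [Finset.mem_Icc] at hn
      omega
    · intro i _
      omega
    · intro n hn
      simp only [Finset.mem_Icc] at hn
      congr 1
      omega
  · refine Finset.sum_nbij' (fun n => (-(n+1)).toNat) (fun j => -(1+(j:ℤ))) ?_ ?_ ?_ ?_ ?_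
    · intro n hn
      simp only [Finset.mem_Icc] at hn
      simp only [Finset.mem_range]
      omega
    · intro j hj
      simp only [Finset.mem_range] at hj
      simp only [Finset.mem_Icc]
      omega
    · intro n hn
      simp only [Finset.mem_Icc] at hn
      omega
    · intro j _
      omega
    · intro n hn
      simp only [Finset.mem_Icc] at hn
      congr 1
      omega

lemma bca_combine {T : Type*} (s : Finset T) (v : T → ℕ → ℝ) (c : T → ℕ → ℕ) (μ : ℝ) (w : T → ℝ)
    (hv : ∀ t ∈ s, Tendsto (fun n : ℕ => (1/(n:ℝ)) * ∑ j ∈ Finset.range n, v t j) atTop (nhds μ))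
    (hc : ∀ t ∈ s, Tendsto (fun N : ℕ => ((c t N : ℝ)) / (2 * N + 1)) atTop (nhds (w t)))
    (hct : ∀ t ∈ s, Tendsto (c t) atTop atTop)
    (hw : ∑ t ∈ s, w t = 1) :
    Tendsto (fun N : ℕ => (1 / (2 * (N:ℝ) + 1)) * ∑ t ∈ s, ∑ j ∈ Finset.range (c t N), v t j)
      atTop (nhds μ) := by
  have key : ∀ N : ℕ,
      (1 / (2 * (N:ℝ) + 1)) * ∑ t ∈ s, ∑ j ∈ Finset.range (c t N), v t j
        = ∑ t ∈ s, ((c t N : ℝ) / (2 * N + 1)) *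
            ((1/(c t N : ℝ)) * ∑ j ∈ Finset.range (c t N), v t j) := by
    intro N
    rw [Finset.mul_sum]
    refine Finset.sum_congr rfl fun t _ => ?_
    rcases Nat.eq_zero_or_pos (c t N) with h | h
    · simp [h]
    · have hc0 : (c t N : ℝ) ≠ 0 := by positivity
      have hden : (2 * (N:ℝ) + 1) ≠ 0 := by positivity
      field_simp
  have h2 : Tendsto (fun N : ℕ => ∑ t ∈ s, ((c t N : ℝ) / (2 * N + 1)) *
      ((1/(c t N : ℝ)) * ∑ j ∈ Finset.range (c t N), v t j)) atTop (nhds (∑ t ∈ s, w t * μ)) := by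
    refine tendsto_finset_sum _ fun t ht => ?_
    exact (hc t ht).mul ((hv t ht).comp (hct t ht))
  rw [← Finset.sum_mul, hw, one_mul] at h2
  exact h2.congr fun N => (key N).symm

lemma bca_assemble (k : ℕ) (hk : 0 < k) (u : ℤ → ℝ) (μ : ℝ)
    (hpos : ∀ r : ℕ, r < k →
      Tendsto (fun n : ℕ => (1/(n:ℝ)) * ∑ j ∈ Finset.range n, u ((r:ℤ) + k * j))
        atTop (nhds μ))
    (hneg : ∀ r : ℕ, r < k →
      Tendsto (fun n : ℕ => (1/(n:ℝ)) * ∑ j ∈ Finset.range n, u (-(1 + (r:ℤ) + k * j)))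
        atTop (nhds μ)) :
    Tendsto (fun N : ℕ => (1 / (2 * (N:ℝ) + 1)) * ∑ n ∈ Finset.Icc (-(N:ℤ)) N, u n)
      atTop (nhds μ) := by
  have hk' : (0:ℝ) < k := by exact_mod_cast hk
  set v : ℕ ⊕ ℕ → ℕ → ℝ :=
    Sum.elim (fun r j => u ((r:ℤ) + k * j)) (fun r j => u (-(1 + (r:ℤ) + k * j))) with hv
  set c : ℕ ⊕ ℕ → ℕ → ℕ :=
    Sum.elim (fun r N => (N + (1 + (k - 1 - r))) / k) (fun r N => (N + (k - 1 - r)) / k) with hc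
  have hCT : ∀ (a : ℕ), Tendsto (fun N => (N + a) / k) atTop atTop := by
    intro a
    rw [tendsto_atTop]
    intro b
    filter_upwards [eventually_ge_atTop (b * k)] with N hN
    rw [Nat.le_div_iff_mul_le hk]
    omega
  have main := bca_combine ((Finset.range k).disjSum (Finset.range k)) v c μ
      (fun _ => 1 / (2 * k)) ?_ ?_ ?_ ?_
  · refine main.congr fun N => ?_
    congr 1
    rw [Finset.sum_disjSum]
    rw [bca_icc_split u N, bca_sum_range_mod k hk (fun i => u i) (N+1),
      bca_sum_range_mod k hk (fun j => u (-(1+(j:ℤ)))) N]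
    congr 1
    · refine Finset.sum_congr rfl fun r hr => ?_
      have : N + 1 + (k - 1 - r) = N + (1 + (k - 1 - r)) := by omega
      rw [this]
      refine Finset.sum_congr rfl fun j hj => ?_
      simp only [hv, Sum.elim_inl]
      norm_cast
    · refine Finset.sum_congr rfl fun r hr => ?_
      refine Finset.sum_congr rfl fun j hj => ?_
      simp only [hv, Sum.elim_inr]
      congr 1
      push_cast
      ring
  · rintro (r | r) ht <;> simp only [Finset.inl_mem_disjSum, Finset.inr_mem_disjSum,
      Finset.mem_range] at ht
    · exact hpos r ht
    · exact hneg r ht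
  · rintro (r | r) _ <;> simp only [hc, Sum.elim_inl, Sum.elim_inr]
    · exact bca_count_tendsto k _ hk
    · exact bca_count_tendsto k _ hk
  · rintro (r | r) _ <;> simp only [hc, Sum.elim_inl, Sum.elim_inr]
    · exact hCT _
    · exact hCT _
  · rw [Finset.sum_const, Finset.card_disjSum, Finset.card_range, nsmul_eq_mul]
    push_cast
    rw [mul_one_div]
    rw [show (k:ℝ) + k = 2 * k by ring, div_self (by positivity)]

open scoped Classical

section Prob

variable {Ω : Type*} [MeasurableSpace Ω] (P : Measure Ω) [IsProbabilityMeasure P]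
  (p : ℝ) (X : ℤ → Ω → ℝ)

lemma bca_map_eval (hmeas : ∀ n, Measurable (X n))
    (hval : ∀ n, ∀ᵐ ω ∂P, X n ω = 1 ∨ X n ω = -1)
    (hdist : ∀ n, P {ω | X n ω = 1} = ENNReal.ofReal p)
    (hdist' : ∀ n, P {ω | X n ω = -1} = ENNReal.ofReal (1 - p))
    (n : ℤ) {s : Set ℝ} (hs : MeasurableSet s) :
    P (X n ⁻¹' s) = (if (1:ℝ) ∈ s then ENNReal.ofReal p else 0)
      + (if (-1:ℝ) ∈ s then ENNReal.ofReal (1-p) else 0) := by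
  set A := {ω | X n ω = 1} with hA
  set B := {ω | X n ω = -1} with hB
  have hAm : MeasurableSet A := hmeas n (measurableSet_singleton 1)
  have hBm : MeasurableSet B := hmeas n (measurableSet_singleton (-1))
  have hAB : P (A ∪ B)ᶜ = 0 := by
    have h := hval n
    rw [ae_iff] at h
    have heq : {ω | ¬(X n ω = 1 ∨ X n ω = -1)} = (A ∪ B)ᶜ := by
      ext ω
      simp [hA, hB, not_or]
    rw [← heq]
    exact h
  have key : P (X n ⁻¹' s) = P (X n ⁻¹' s ∩ (A ∪ B)) := (measure_inter_conull hAB).symm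
  rw [key, Set.inter_union_distrib_left]
  have hsA : X n ⁻¹' s ∩ A = if (1:ℝ) ∈ s then A else ∅ := by
    split_ifs with h1
    · ext ω
      simp only [Set.mem_inter_iff, Set.mem_preimage, hA, Set.mem_setOf_eq]
      exact ⟨fun h => h.2, fun h => ⟨by rw [h]; exact h1, h⟩⟩
    · ext ω
      simp only [Set.mem_inter_iff, Set.mem_preimage, hA, Set.mem_setOf_eq,
        Set.mem_empty_iff_false, iff_false, not_and]
      intro hms hA1
      exact h1 (hA1 ▸ hms)
  have hsB : X n ⁻¹' s ∩ B = if (-1:ℝ) ∈ s then B else ∅ := by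
    split_ifs with h1
    · ext ω
      simp only [Set.mem_inter_iff, Set.mem_preimage, hB, Set.mem_setOf_eq]
      exact ⟨fun h => h.2, fun h => ⟨by rw [h]; exact h1, h⟩⟩
    · ext ω
      simp only [Set.mem_inter_iff, Set.mem_preimage, hB, Set.mem_setOf_eq,
        Set.mem_empty_iff_false, iff_false, not_and]
      intro hms hB1
      exact h1 (hB1 ▸ hms)
  have hdisj : Disjoint A B := by
    rw [Set.disjoint_left]
    intro ω h1 h2
    rw [hA, Set.mem_setOf_eq] at h1
    rw [hB, Set.mem_setOf_eq] at h2
    rw [h1] at h2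
    norm_num at h2
  rw [hsA, hsB]
  split_ifs with h1 h2 h2
  · rw [measure_union (by simpa using hdisj) hBm, hdist n, hdist' n]
  · simp [hA, hdist n]
  · simp [hB, hdist' n]
  · simp

lemma bca_law_eq (hmeas : ∀ n, Measurable (X n))
    (hval : ∀ n, ∀ᵐ ω ∂P, X n ω = 1 ∨ X n ω = -1)
    (hdist : ∀ n, P {ω | X n ω = 1} = ENNReal.ofReal p)
    (hdist' : ∀ n, P {ω | X n ω = -1} = ENNReal.ofReal (1 - p))
    (a b : ℤ) : Measure.map (X a) P = Measure.map (X b) P := by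
  refine Measure.ext fun s hs => ?_
  rw [Measure.map_apply (hmeas a) hs, Measure.map_apply (hmeas b) hs,
    bca_map_eval P p X hmeas hval hdist hdist' a hs,
    bca_map_eval P p X hmeas hval hdist hdist' b hs]

lemma bca_integral_X (hp0 : 0 ≤ p) (hp1 : p ≤ 1)
    (hmeas : ∀ n, Measurable (X n))
    (hval : ∀ n, ∀ᵐ ω ∂P, X n ω = 1 ∨ X n ω = -1)
    (hdist : ∀ n, P {ω | X n ω = 1} = ENNReal.ofReal p)
    (hdist' : ∀ n, P {ω | X n ω = -1} = ENNReal.ofReal (1 - p))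
    (n : ℤ) : ∫ ω, X n ω ∂P = 2 * p - 1 := by
  set A := {ω | X n ω = 1} with hA
  set B := {ω | X n ω = -1} with hB
  have hAm : MeasurableSet A := hmeas n (measurableSet_singleton 1)
  have hBm : MeasurableSet B := hmeas n (measurableSet_singleton (-1))
  have hXg : X n =ᵐ[P] fun ω =>
      A.indicator (fun _ => (1:ℝ)) ω + B.indicator (fun _ => (-1:ℝ)) ω := by
    filter_upwards [hval n] with ω h
    rcases h with h | h
    · have hωA : ω ∈ A := h
      have hωB : ω ∉ B := by
        rw [hB, Set.mem_setOf_eq, h]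
        norm_num
      rw [Set.indicator_of_mem hωA, Set.indicator_of_notMem hωB, h]
      norm_num
    · have hωB : ω ∈ B := h
      have hωA : ω ∉ A := by
        rw [hA, Set.mem_setOf_eq, h]
        norm_num
      rw [Set.indicator_of_mem hωB, Set.indicator_of_notMem hωA, h]
      norm_num
  rw [integral_congr_ae hXg,
    integral_add ((integrable_const (1:ℝ)).indicator hAm)
      ((integrable_const (-1:ℝ)).indicator hBm),
    integral_indicator_const (1:ℝ) hAm, integral_indicator_const (-1:ℝ) hBm, measureReal_def, measureReal_def,
    hdist n, hdist' n, ENNReal.toReal_ofReal hp0, ENNReal.toReal_ofReal (by linarith)]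
  simp only [smul_eq_mul]
  ring

lemma bca_identDistrib_prod (hmeas : ∀ n, Measurable (X n))
    (hindep : iIndepFun X P)
    (hval : ∀ n, ∀ᵐ ω ∂P, X n ω = 1 ∨ X n ω = -1)
    (hdist : ∀ n, P {ω | X n ω = 1} = ENNReal.ofReal p)
    (hdist' : ∀ n, P {ω | X n ω = -1} = ENNReal.ofReal (1 - p))
    (a b c d : ℤ) (hab : a ≠ b) (hcd : c ≠ d) :
    IdentDistrib (fun ω => X a ω * X b ω) (fun ω => X c ω * X d ω) P P := by
  have law := bca_law_eq P p X hmeas hval hdist hdist'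
  have h1 : Measure.map (fun ω => (X a ω, X b ω)) P
      = (Measure.map (X a) P).prod (Measure.map (X b) P) :=
    (indepFun_iff_map_prod_eq_prod_map_map (hmeas a).aemeasurable
      (hmeas b).aemeasurable).mp (hindep.indepFun hab)
  have h2 : Measure.map (fun ω => (X c ω, X d ω)) P
      = (Measure.map (X c) P).prod (Measure.map (X d) P) :=
    (indepFun_iff_map_prod_eq_prod_map_map (hmeas c).aemeasurable
      (hmeas d).aemeasurable).mp (hindep.indepFun hcd)
  have hpair : IdentDistrib (fun ω => (X a ω, X b ω)) (fun ω => (X c ω, X d ω)) P P :=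
    ⟨((hmeas a).prodMk (hmeas b)).aemeasurable, ((hmeas c).prodMk (hmeas d)).aemeasurable,
      by rw [h1, h2, law a c, law b d]⟩
  exact hpair.comp (measurable_fst.mul measurable_snd)

lemma bca_slln_sub (hp0 : 0 ≤ p) (hp1 : p ≤ 1)
    (hmeas : ∀ n, Measurable (X n))
    (hindep : iIndepFun X P)
    (hval : ∀ n, ∀ᵐ ω ∂P, X n ω = 1 ∨ X n ω = -1)
    (hdist : ∀ n, P {ω | X n ω = 1} = ENNReal.ofReal p)
    (hdist' : ∀ n, P {ω | X n ω = -1} = ENNReal.ofReal (1 - p))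
    (m : ℤ) (hm : m ≠ 0) (ψ : ℕ → ℤ)
    (hsep : ∀ i j : ℕ, i ≠ j → m.natAbs < (ψ i - ψ j).natAbs) :
    ∀ᵐ ω ∂P, Tendsto
      (fun n : ℕ => (1/(n:ℝ)) * ∑ j ∈ Finset.range n, X (ψ j) ω * X (ψ j - m) ω)
      atTop (nhds ((2*p-1)^2)) := by
  have hab : ∀ j : ℕ, ψ j ≠ ψ j - m := fun j => by omega
  have hint : Integrable (fun ω => X (ψ 0) ω * X (ψ 0 - m) ω) P := by
    refine Integrable.mono' (integrable_const 1)
      (((hmeas _).mul (hmeas _)).aestronglyMeasurable) ?_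
    filter_upwards [hval (ψ 0), hval (ψ 0 - m)] with ω h1 h2
    rcases h1 with h1 | h1 <;> rcases h2 with h2 | h2 <;>
      simp [h1, h2]
  have hindepU : Pairwise (Function.onFun (IndepFun · · P)
      fun j : ℕ => fun ω => X (ψ j) ω * X (ψ j - m) ω) := by
    intro i j hij
    have hs := hsep i j hij
    have h1 : ψ i ≠ ψ j := by omega
    have h2 : ψ i ≠ ψ j - m := by omega
    have h3 : ψ i - m ≠ ψ j := by omega
    have h4 : ψ i - m ≠ ψ j - m := by omega
    exact hindep.indepFun_mul_mul hmeas _ _ _ _ h1 h2 h3 h4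
  have hident : ∀ i : ℕ,
      IdentDistrib (fun ω => X (ψ i) ω * X (ψ i - m) ω)
        (fun ω => X (ψ 0) ω * X (ψ 0 - m) ω) P P := fun i =>
    bca_identDistrib_prod P p X hmeas hindep hval hdist hdist' _ _ _ _ (hab i) (hab 0)
  have hmean : ∫ ω, X (ψ 0) ω * X (ψ 0 - m) ω ∂P = (2*p-1)^2 := by
    have := (hindep.indepFun (hab 0)).integral_mul_eq_mul_integral
      (hmeas (ψ 0)).aestronglyMeasurable (hmeas (ψ 0 - m)).aestronglyMeasurable
    calc ∫ ω, X (ψ 0) ω * X (ψ 0 - m) ω ∂P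
        = ∫ ω, (X (ψ 0) * X (ψ 0 - m)) ω ∂P := rfl
      _ = (∫ ω, X (ψ 0) ω ∂P) * ∫ ω, X (ψ 0 - m) ω ∂P := this
      _ = (2*p-1) * (2*p-1) := by
          rw [bca_integral_X P p X hp0 hp1 hmeas hval hdist hdist',
            bca_integral_X P p X hp0 hp1 hmeas hval hdist hdist']
      _ = (2*p-1)^2 := by ring
  have hsl := strong_law_ae_real _ hint hindepU hident
  filter_upwards [hsl] with ω hω
  rw [hmean] at hω
  refine hω.congr fun n => ?_
  rw [div_eq_inv_mul, ← one_div]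
end Prob

/-- Almost sure autocorrelation of the Bernoulli coin-tossing comb: for an i.i.d.
family of `±1`-valued random variables with `P(X = 1) = p`, almost surely
`(1/(2N+1)) ∑_{n=-N}^N X(n) X(n-m) → (2p-1)² + 4p(1-p) δ_{m,0}` for every `m`. -/
theorem bernoulli_comb_autocorrelation
    {Ω : Type*} [MeasurableSpace Ω] (P : Measure Ω) [IsProbabilityMeasure P]
    (p : ℝ) (hp0 : 0 ≤ p) (hp1 : p ≤ 1)
    (X : ℤ → Ω → ℝ)
    (hmeas : ∀ n, Measurable (X n))
    (hindep : iIndepFun X P)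
    (hval : ∀ n, ∀ᵐ ω ∂P, X n ω = 1 ∨ X n ω = -1)
    (hdist : ∀ n, P {ω | X n ω = 1} = ENNReal.ofReal p)
    (hdist' : ∀ n, P {ω | X n ω = -1} = ENNReal.ofReal (1 - p)) :
    ∀ᵐ ω ∂P, ∀ m : ℤ,
      Tendsto
        (fun N : ℕ => (1 / (2 * (N : ℝ) + 1)) *
          ∑ n ∈ Finset.Icc (-(N : ℤ)) (N : ℤ), X n ω * X (n - m) ω)
        atTop
        (nhds ((2 * p - 1) ^ 2 + 4 * p * (1 - p) * (if m = 0 then 1 else 0))) := by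
  have E1 : ∀ᵐ ω ∂P, ∀ n : ℤ, X n ω = 1 ∨ X n ω = -1 := ae_all_iff.2 hval
  have E2 : ∀ᵐ ω ∂P, ∀ m : ℤ, ∀ r : ℕ, m ≠ 0 →
      (Tendsto (fun n : ℕ => (1/(n:ℝ)) * ∑ j ∈ Finset.range n,
          X ((r:ℤ) + (m.natAbs + 1 : ℕ) * j) ω * X ((r:ℤ) + (m.natAbs + 1 : ℕ) * j - m) ω)
        atTop (nhds ((2*p-1)^2))) ∧
      (Tendsto (fun n : ℕ => (1/(n:ℝ)) * ∑ j ∈ Finset.range n,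
          X (-(1 + (r:ℤ) + (m.natAbs + 1 : ℕ) * j)) ω
            * X (-(1 + (r:ℤ) + (m.natAbs + 1 : ℕ) * j) - m) ω)
        atTop (nhds ((2*p-1)^2))) := by
    rw [ae_all_iff]
    intro m
    rw [ae_all_iff]
    intro r
    by_cases hm : m = 0
    · filter_upwards with ω h
      exact absurd hm h
    · have hsep1 : ∀ i j : ℕ, i ≠ j →
          m.natAbs < (((r:ℤ) + (m.natAbs + 1 : ℕ) * i) - ((r:ℤ) + (m.natAbs + 1 : ℕ) * j)).natAbs := by
        intro i j hij
        have heq : ((r:ℤ) + (m.natAbs + 1 : ℕ) * i) - ((r:ℤ) + (m.natAbs + 1 : ℕ) * j)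
            = ((m.natAbs + 1 : ℕ) : ℤ) * ((i:ℤ) - (j:ℤ)) := by push_cast; ring
        rw [heq, Int.natAbs_mul, Int.natAbs_natCast]
        have h1 : 1 ≤ ((i:ℤ) - (j:ℤ)).natAbs := by omega
        calc m.natAbs < (m.natAbs + 1) * 1 := by omega
          _ ≤ (m.natAbs + 1) * ((i:ℤ) - (j:ℤ)).natAbs := Nat.mul_le_mul_left _ h1
      have hsep2 : ∀ i j : ℕ, i ≠ j →
          m.natAbs < ((-(1 + (r:ℤ) + (m.natAbs + 1 : ℕ) * i)) - (-(1 + (r:ℤ) + (m.natAbs + 1 : ℕ) * j))).natAbs := by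
        intro i j hij
        have heq : (-(1 + (r:ℤ) + (m.natAbs + 1 : ℕ) * i)) - (-(1 + (r:ℤ) + (m.natAbs + 1 : ℕ) * j))
            = ((m.natAbs + 1 : ℕ) : ℤ) * ((j:ℤ) - (i:ℤ)) := by push_cast; ring
        rw [heq, Int.natAbs_mul, Int.natAbs_natCast]
        have h1 : 1 ≤ ((j:ℤ) - (i:ℤ)).natAbs := by omega
        calc m.natAbs < (m.natAbs + 1) * 1 := by omega
          _ ≤ (m.natAbs + 1) * ((j:ℤ) - (i:ℤ)).natAbs := Nat.mul_le_mul_left _ h1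
      have hpos := bca_slln_sub P p X hp0 hp1 hmeas hindep hval hdist hdist' m hm
        (fun j : ℕ => (r:ℤ) + (m.natAbs + 1 : ℕ) * j) hsep1
      have hneg := bca_slln_sub P p X hp0 hp1 hmeas hindep hval hdist hdist' m hm
        (fun j : ℕ => -(1 + (r:ℤ) + (m.natAbs + 1 : ℕ) * j)) hsep2
      filter_upwards [hpos, hneg] with ω h1 h2 _
      exact ⟨h1, h2⟩
  filter_upwards [E1, E2] with ω h1 h2
  intro m
  by_cases hm : m = 0
  · subst hm
    rw [if_pos rfl, show (2*p-1)^2 + 4*p*(1-p)*1 = 1 by ring]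
    have key : ∀ N : ℕ,
        (1 / (2 * (N:ℝ) + 1)) * ∑ n ∈ Finset.Icc (-(N:ℤ)) N, X n ω * X (n - 0) ω = 1 := by
      intro N
      have hsum : ∑ n ∈ Finset.Icc (-(N:ℤ)) N, X n ω * X (n - 0) ω = (2*(N:ℝ)+1) := by
        have hone : ∀ n ∈ Finset.Icc (-(N:ℤ)) N, X n ω * X (n - 0) ω = 1 := by
          intro n _
          rw [sub_zero]
          rcases h1 n with h | h <;> rw [h] <;> norm_num
        rw [Finset.sum_congr rfl hone, Finset.sum_const]
        have hcard : (Finset.Icc (-(N:ℤ)) N).card = 2*N+1 := by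
          rw [Int.card_Icc]
          omega
        rw [hcard, nsmul_eq_mul, mul_one]
        push_cast
        ring
      rw [hsum]
      have hne : (2*(N:ℝ)+1) ≠ 0 := by positivity
      field_simp
    have heq : (fun N : ℕ => (1 / (2 * (N:ℝ) + 1)) *
        ∑ n ∈ Finset.Icc (-(N:ℤ)) N, X n ω * X (n - 0) ω) = fun _ => (1:ℝ) := funext key
    rw [heq]
    exact tendsto_const_nhds
  · rw [if_neg hm, show (2*p-1)^2 + 4*p*(1-p)*0 = (2*p-1)^2 by ring]
    refine bca_assemble (m.natAbs + 1) (Nat.succ_pos _) (fun n => X n ω * X (n - m) ω)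
      ((2*p-1)^2) ?_ ?_
    · intro r hr
      exact (h2 m r hm).1
    · intro r hr
      exact (h2 m r hm).2
end

section
/- Let w : ℤ → {±1} be a deterministic sequence and (X(n))_{n∈ℤ} an i.i.d. family with P(X(n)=1)=p, P(X(n)=-1)=1-p. Suppose that for all m ∈ ℤ the limit η(m) = lim_N (1/(2N+1)) ∑_{n=-N}^N w(n)w(n-m) exists and η(m) = δ_{m,0}. Then, almost surely, for all m ∈ ℤ, lim_N (1/(2N+1)) ∑_{n=-N}^N w(n)X(n)·w(n-m)X(n-m) = δ_{m,0}, independently of p. -/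
open Filter MeasureTheory ProbabilityTheory

private lemma bdd_integrable {Ω : Type*} [MeasurableSpace Ω] (P : Measure Ω)
    [IsProbabilityMeasure P] {f : Ω → ℝ} (C : ℝ) (hf : Measurable f)
    (h : ∀ ω, |f ω| ≤ C) : Integrable f P :=
  (integrable_const C).mono' hf.aestronglyMeasurable (ae_of_all _ (by simpa using h))

private lemma sqrt_tendsto_atTop : Tendsto Nat.sqrt atTop atTop := by
  apply tendsto_atTop_atTop.2
  intro b
  exact ⟨b * b, fun n hn => le_trans (le_of_eq (Nat.sqrt_eq b).symm) (Nat.sqrt_le_sqrt hn)⟩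

set_option maxHeartbeats 1000000 in
private lemma aux_main {Ω : Type*} [MeasurableSpace Ω] (P : Measure Ω) [IsProbabilityMeasure P]
    (q : ℝ) (hq : |q| ≤ 1)
    (Y : ℤ → Ω → ℝ) (hYmeas : ∀ n, Measurable (Y n))
    (hYindep : iIndepFun Y P)
    (hYval : ∀ n ω, Y n ω = 1 ∨ Y n ω = -1)
    (hYmean : ∀ n, ∫ ω, Y n ω ∂P = q)
    (c : ℤ → ℝ) (hc : ∀ n, |c n| ≤ 1) (m : ℤ) (hm : m ≠ 0) :
    ∀ᵐ ω ∂P, Tendsto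
      (fun N : ℕ => (1 / (2 * (N : ℝ) + 1)) *
        ∑ n ∈ Finset.Icc (-(N : ℤ)) (N : ℤ), (c n * (Y n ω * Y (n - m) ω) - c n * q ^ 2))
      atTop (nhds 0) := by
  classical
  -- basic bounds
  have hYb : ∀ n ω, |Y n ω| ≤ 1 := by
    intro n ω; rcases hYval n ω with h | h <;> rw [h] <;> simp
  have hq2 : q ^ 2 ≤ 1 := by
    have := sq_abs q; nlinarith [abs_nonneg q]
  have hq2' : (0:ℝ) ≤ q ^ 2 := sq_nonneg q
  set V : ℤ → Ω → ℝ := fun n ω => c n * (Y n ω * Y (n - m) ω) - c n * q ^ 2 with hV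
  have hPb : ∀ a b (ω : Ω), |Y a ω * Y b ω| ≤ 1 := by
    intro a b ω
    rw [abs_mul]
    exact mul_le_one₀ (hYb a ω) (abs_nonneg _) (hYb b ω)
  have hVb : ∀ n ω, |V n ω| ≤ 2 := by
    intro n ω
    have h1 : |c n * (Y n ω * Y (n - m) ω)| ≤ 1 := by
      rw [abs_mul]
      exact mul_le_one₀ (hc n) (abs_nonneg _) (hPb _ _ ω)
    have h2 : |c n * q ^ 2| ≤ 1 := by
      rw [abs_mul]
      exact mul_le_one₀ (hc n) (abs_nonneg _) (by rwa [abs_of_nonneg hq2'])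
    calc |V n ω| = |c n * (Y n ω * Y (n - m) ω) + -(c n * q ^ 2)| := by rw [hV]; ring_nf
      _ ≤ |c n * (Y n ω * Y (n - m) ω)| + |-(c n * q ^ 2)| := abs_add_le _ _
      _ ≤ 2 := by rw [abs_neg]; linarith
  have hVmeas : ∀ n, Measurable (V n) :=
    fun n => (measurable_const.mul ((hYmeas n).mul (hYmeas (n - m)))).sub measurable_const
  have hVVb : ∀ n n' (ω : Ω), |V n ω * V n' ω| ≤ 4 := by
    intro n n' ω
    rw [abs_mul]
    calc |V n ω| * |V n' ω| ≤ 2 * 2 :=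
          mul_le_mul (hVb n ω) (hVb n' ω) (abs_nonneg _) (by norm_num)
      _ = 4 := by norm_num
  have hVVint : ∀ n n', Integrable (fun ω => V n ω * V n' ω) P :=
    fun n n' => bdd_integrable P 4 ((hVmeas n).mul (hVmeas n')) (hVVb n n')
  -- pair expectations
  have hpair : ∀ a b : ℤ, a ≠ b → ∫ ω, Y a ω * Y b ω ∂P = q * q := by
    intro a b hab
    have h := (hYindep.indepFun hab).integral_mul_eq_mul_integral
      (hYmeas a).aestronglyMeasurable (hYmeas b).aestronglyMeasurable
    calc ∫ ω, Y a ω * Y b ω ∂P = ∫ ω, (Y a * Y b) ω ∂P := rfl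
      _ = (∫ ω, Y a ω ∂P) * ∫ ω, Y b ω ∂P := h
      _ = q * q := by rw [hYmean a, hYmean b]
  have hquad : ∀ a b a' b' : ℤ, a ≠ a' → a ≠ b' → b ≠ a' → b ≠ b' →
      ∫ ω, (Y a ω * Y b ω) * (Y a' ω * Y b' ω) ∂P =
        (∫ ω, Y a ω * Y b ω ∂P) * ∫ ω, Y a' ω * Y b' ω ∂P := by
    intro a b a' b' h1 h2 h3 h4
    exact (hYindep.indepFun_mul_mul hYmeas a b a' b' h1 h2 h3 h4).integral_mul_eq_mul_integral
      ((hYmeas a).mul (hYmeas b)).aestronglyMeasurable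
      ((hYmeas a').mul (hYmeas b')).aestronglyMeasurable
  -- covariance vanishing
  have hPint : ∀ a b : ℤ, Integrable (fun ω => Y a ω * Y b ω) P :=
    fun a b => bdd_integrable P 1 ((hYmeas a).mul (hYmeas b)) (hPb a b)
  have hcov : ∀ n n' : ℤ, n' ≠ n - m → n' ≠ n → n' ≠ n + m →
      ∫ ω, V n ω * V n' ω ∂P = 0 := by
    intro n n' h1 h2 h3
    have e1 : ∫ ω, (Y n ω * Y (n - m) ω) * (Y n' ω * Y (n' - m) ω) ∂P = (q * q) * (q * q) := by
      rw [hquad n (n - m) n' (n' - m) (by omega) (by omega) (by omega) (by omega),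
        hpair n (n - m) (by omega), hpair n' (n' - m) (by omega)]
    have e2 : ∫ ω, Y n ω * Y (n - m) ω ∂P = q * q := hpair n (n - m) (by omega)
    have e3 : ∫ ω, Y n' ω * Y (n' - m) ω ∂P = q * q := hpair n' (n' - m) (by omega)
    have hident : (fun ω => V n ω * V n' ω) = fun ω =>
        (c n * c n') * ((Y n ω * Y (n - m) ω) * (Y n' ω * Y (n' - m) ω))
        - (c n * c n' * q ^ 2) * (Y n' ω * Y (n' - m) ω)
        - (c n * c n' * q ^ 2) * (Y n ω * Y (n - m) ω)
        + (c n * c n' * q ^ 2 * q ^ 2) := by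
      funext ω; rw [hV]; ring
    have i1 : Integrable (fun ω =>
        (c n * c n') * ((Y n ω * Y (n - m) ω) * (Y n' ω * Y (n' - m) ω))) P :=
      (bdd_integrable P 1 (((hYmeas n).mul (hYmeas (n - m))).mul
        ((hYmeas n').mul (hYmeas (n' - m)))) (fun ω => by
          simp only [Pi.mul_apply]; rw [abs_mul]
          exact mul_le_one₀ (hPb _ _ ω) (abs_nonneg _) (hPb _ _ ω))).const_mul _
    have i2 : Integrable (fun ω =>
        (c n * c n' * q ^ 2) * (Y n' ω * Y (n' - m) ω)) P := (hPint _ _).const_mul _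
    have i3 : Integrable (fun ω =>
        (c n * c n' * q ^ 2) * (Y n ω * Y (n - m) ω)) P := (hPint _ _).const_mul _
    have i12 : Integrable (fun ω =>
        (c n * c n') * ((Y n ω * Y (n - m) ω) * (Y n' ω * Y (n' - m) ω))
        - (c n * c n' * q ^ 2) * (Y n' ω * Y (n' - m) ω)) P := i1.sub i2
    have i123 : Integrable (fun ω =>
        (c n * c n') * ((Y n ω * Y (n - m) ω) * (Y n' ω * Y (n' - m) ω))
        - (c n * c n' * q ^ 2) * (Y n' ω * Y (n' - m) ω)
        - (c n * c n' * q ^ 2) * (Y n ω * Y (n - m) ω)) P := i12.sub i3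
    rw [hident, integral_add i123 (integrable_const _),
      integral_sub i12 i3, integral_sub i1 i2,
      integral_const_mul, integral_const_mul, integral_const_mul, integral_const]
    rw [e1, e2, e3]
    simp only [measure_univ, ENNReal.toReal_one, smul_eq_mul, one_mul, probReal_univ]
    ring
  -- the centered sums
  set S : ℕ → Ω → ℝ := fun N ω => ∑ n ∈ Finset.Icc (-(N : ℤ)) (N : ℤ), V n ω with hS
  have hSmeas : ∀ N, Measurable (S N) := fun N => Finset.measurable_sum _ fun n _ => hVmeas n
  have hcard : ∀ N : ℕ, ((Finset.Icc (-(N : ℤ)) (N : ℤ)).card : ℝ) = 2 * (N : ℝ) + 1 := by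
    intro N
    have : (Finset.Icc (-(N : ℤ)) (N : ℤ)).card = 2 * N + 1 := by
      rw [Int.card_Icc]; omega
    rw [this]; push_cast; ring
  have hd : ∀ N : ℕ, (0:ℝ) < 2 * (N : ℝ) + 1 := by
    intro N; positivity
  have hSb : ∀ N ω, |S N ω| ≤ 2 * (2 * (N : ℝ) + 1) := by
    intro N ω
    calc |S N ω| ≤ ∑ n ∈ Finset.Icc (-(N : ℤ)) (N : ℤ), |V n ω| :=
          Finset.abs_sum_le_sum_abs _ _
      _ ≤ ∑ n ∈ Finset.Icc (-(N : ℤ)) (N : ℤ), 2 :=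
          Finset.sum_le_sum fun n _ => hVb n ω
      _ = 2 * (2 * (N : ℝ) + 1) := by
          rw [Finset.sum_const, nsmul_eq_mul, hcard]; ring
  -- second moment bound
  have hvar : ∀ N : ℕ, ∫ ω, (S N ω) ^ 2 ∂P ≤ 12 * (2 * (N : ℝ) + 1) := by
    intro N
    have hexp : ∫ ω, (S N ω) ^ 2 ∂P =
        ∑ n ∈ Finset.Icc (-(N : ℤ)) (N : ℤ), ∑ n' ∈ Finset.Icc (-(N : ℤ)) (N : ℤ),
          ∫ ω, V n ω * V n' ω ∂P := by
      have h1 : (fun ω => (S N ω) ^ 2) = fun ω =>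
          ∑ n ∈ Finset.Icc (-(N : ℤ)) (N : ℤ), ∑ n' ∈ Finset.Icc (-(N : ℤ)) (N : ℤ),
            V n ω * V n' ω := by
        funext ω; rw [hS, sq, Finset.sum_mul_sum]
      rw [h1, integral_finset_sum _ fun n _ =>
        integrable_finset_sum _ fun n' _ => hVVint n n']
      exact Finset.sum_congr rfl fun n _ => integral_finset_sum _ fun n' _ => hVVint n n'
    rw [hexp]
    have habs : ∀ n n' : ℤ, |∫ ω, V n ω * V n' ω ∂P| ≤ 4 := by
      intro n n'
      have h := norm_integral_le_of_norm_le_const (μ := P)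
        (f := fun ω => V n ω * V n' ω) (C := 4) (ae_of_all _ fun ω => by
          rw [Real.norm_eq_abs]; exact hVVb n n' ω)
      simpa [Real.norm_eq_abs] using h
    have hinner : ∀ n : ℤ, ∑ n' ∈ Finset.Icc (-(N : ℤ)) (N : ℤ),
        ∫ ω, V n ω * V n' ω ∂P ≤ 12 := by
      intro n
      have hfil : ∑ n' ∈ (Finset.Icc (-(N : ℤ)) (N : ℤ)).filter
            (fun n' => n' ∈ ({n - m, n, n + m} : Finset ℤ)),
            ∫ ω, V n ω * V n' ω ∂P
          = ∑ n' ∈ Finset.Icc (-(N : ℤ)) (N : ℤ), ∫ ω, V n ω * V n' ω ∂P := by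
        apply Finset.sum_filter_of_ne
        intro n' _ hne
        by_contra h
        simp only [Finset.mem_insert, Finset.mem_singleton] at h
        push_neg at h
        exact hne (hcov n n' h.1 h.2.1 h.2.2)
      rw [← hfil]
      have hcard3 : ((Finset.Icc (-(N : ℤ)) (N : ℤ)).filter
          (fun n' => n' ∈ ({n - m, n, n + m} : Finset ℤ))).card ≤ 3 := by
        calc _ ≤ ({n - m, n, n + m} : Finset ℤ).card := by
              apply Finset.card_le_card
              intro x hx
              exact (Finset.mem_filter.1 hx).2
          _ ≤ 3 := by
              apply le_trans (Finset.card_insert_le _ _)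
              have := Finset.card_insert_le (n : ℤ) ({n + m} : Finset ℤ)
              simp at this ⊢; omega
      calc ∑ n' ∈ (Finset.Icc (-(N : ℤ)) (N : ℤ)).filter
            (fun n' => n' ∈ ({n - m, n, n + m} : Finset ℤ)),
            ∫ ω, V n ω * V n' ω ∂P
          ≤ ∑ n' ∈ (Finset.Icc (-(N : ℤ)) (N : ℤ)).filter
            (fun n' => n' ∈ ({n - m, n, n + m} : Finset ℤ)), 4 :=
            Finset.sum_le_sum fun n' _ => le_of_abs_le (habs n n')
        _ ≤ 12 := by
            rw [Finset.sum_const, nsmul_eq_mul]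
            have : (((Finset.Icc (-(N : ℤ)) (N : ℤ)).filter
              (fun n' => n' ∈ ({n - m, n, n + m} : Finset ℤ))).card : ℝ) ≤ 3 := by
              exact_mod_cast hcard3
            nlinarith
    calc ∑ n ∈ Finset.Icc (-(N : ℤ)) (N : ℤ), ∑ n' ∈ Finset.Icc (-(N : ℤ)) (N : ℤ),
          ∫ ω, V n ω * V n' ω ∂P
        ≤ ∑ n ∈ Finset.Icc (-(N : ℤ)) (N : ℤ), 12 := Finset.sum_le_sum fun n _ => hinner n
      _ = 12 * (2 * (N : ℝ) + 1) := by rw [Finset.sum_const, nsmul_eq_mul, hcard]; ring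
  -- squares of normalized sums along the subsequence k ↦ k²
  set g : ℕ → Ω → ℝ := fun k ω => (S (k ^ 2) ω / (2 * ((k ^ 2 : ℕ) : ℝ) + 1)) ^ 2 with hg
  have hg0 : ∀ k ω, 0 ≤ g k ω := fun k ω => sq_nonneg _
  have hgb : ∀ k ω, g k ω ≤ 4 := by
    intro k ω
    have hx : |S (k ^ 2) ω / (2 * ((k ^ 2 : ℕ) : ℝ) + 1)| ≤ 2 := by
      rw [abs_div, abs_of_pos (hd (k ^ 2))]
      rw [div_le_iff₀ (hd (k ^ 2))]
      exact hSb (k ^ 2) ω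
    calc g k ω = |S (k ^ 2) ω / (2 * ((k ^ 2 : ℕ) : ℝ) + 1)| ^ 2 := by
          simp only [hg]; rw [sq_abs]
      _ ≤ 2 ^ 2 := pow_le_pow_left₀ (abs_nonneg _) hx 2
      _ = 4 := by norm_num
  have hgmeas : ∀ k, Measurable (g k) := fun k => ((hSmeas (k ^ 2)).div_const _).pow_const 2
  have hgint : ∀ k, Integrable (g k) P := fun k =>
    bdd_integrable P 4 (hgmeas k) fun ω => by
      rw [abs_of_nonneg (hg0 k ω)]; exact hgb k ω
  have hgI : ∀ k, ∫ ω, g k ω ∂P ≤ 12 / (2 * ((k ^ 2 : ℕ) : ℝ) + 1) := by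
    intro k
    have heq : ∫ ω, g k ω ∂P =
        (1 / (2 * ((k ^ 2 : ℕ) : ℝ) + 1) ^ 2) * ∫ ω, (S (k ^ 2) ω) ^ 2 ∂P := by
      rw [← integral_const_mul]
      congr 1
      funext ω
      simp only [hg]
      rw [div_pow]
      ring
    rw [heq]
    have h1 := hvar (k ^ 2)
    have hpos := hd (k ^ 2)
    calc (1 / (2 * ((k ^ 2 : ℕ) : ℝ) + 1) ^ 2) * ∫ ω, (S (k ^ 2) ω) ^ 2 ∂P
        ≤ (1 / (2 * ((k ^ 2 : ℕ) : ℝ) + 1) ^ 2) * (12 * (2 * ((k ^ 2 : ℕ) : ℝ) + 1)) :=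
          mul_le_mul_of_nonneg_left h1 (by positivity)
      _ = 12 / (2 * ((k ^ 2 : ℕ) : ℝ) + 1) := by field_simp
  have hsum : Summable (fun k : ℕ => 12 / (2 * ((k ^ 2 : ℕ) : ℝ) + 1)) := by
    have h1 : Summable (fun k : ℕ => (1:ℝ) / (k : ℝ) ^ 2) :=
      Real.summable_one_div_nat_pow.mpr one_lt_two
    have h2 : Summable (fun k : ℕ => (1:ℝ) / ((k + 1 : ℕ) : ℝ) ^ 2) :=
      (summable_nat_add_iff 1).mpr h1
    have h3 := h2.mul_left 24
    apply Summable.of_nonneg_of_le (fun k => by positivity) _ h3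
    intro k
    have hpos1 : (0:ℝ) < ((k + 1 : ℕ) : ℝ) ^ 2 := by positivity
    rw [mul_one_div, div_le_div_iff₀ (hd (k ^ 2)) hpos1]
    push_cast
    nlinarith [sq_nonneg ((k:ℝ) - 1), sq_nonneg (k:ℝ)]
  -- almost sure convergence along the subsequence of squares
  have key : ∀ᵐ ω ∂P, Tendsto (fun k => g k ω) atTop (nhds 0) := by
    have hae : ∀ᵐ ω ∂P, (∑' k, ENNReal.ofReal (g k ω)) < ⊤ := by
      apply ae_lt_top (Measurable.ennreal_tsum fun k =>
        ENNReal.measurable_ofReal.comp (hgmeas k))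
      rw [lintegral_tsum fun k =>
        (ENNReal.measurable_ofReal.comp (hgmeas k)).aemeasurable]
      have hlt : ∑' k, ∫⁻ ω, ENNReal.ofReal (g k ω) ∂P
          ≤ ∑' k, ENNReal.ofReal (12 / (2 * ((k ^ 2 : ℕ) : ℝ) + 1)) := by
        apply ENNReal.tsum_le_tsum
        intro k
        rw [← ofReal_integral_eq_lintegral_ofReal (hgint k) (ae_of_all _ (hg0 k))]
        exact ENNReal.ofReal_le_ofReal (hgI k)
      have hfin : ∑' k, ENNReal.ofReal (12 / (2 * ((k ^ 2 : ℕ) : ℝ) + 1)) ≠ ⊤ := by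
        rw [← ENNReal.ofReal_tsum_of_nonneg (fun k => by positivity) hsum]
        exact ENNReal.ofReal_ne_top
      exact ne_top_of_le_ne_top hfin hlt
    filter_upwards [hae] with ω hω
    have h0 : Tendsto (fun k => ENNReal.ofReal (g k ω)) atTop (nhds 0) :=
      ENNReal.tendsto_atTop_zero_of_tsum_ne_top hω.ne
    have h1 := (ENNReal.tendsto_toReal (a := 0) (by simp)).comp h0
    have heq : (fun k => (ENNReal.ofReal (g k ω)).toReal) = fun k => g k ω :=
      funext fun k => ENNReal.toReal_ofReal (hg0 k ω)
    rw [← heq]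
    simpa [Function.comp_def] using h1
  have hsq : ∀ᵐ ω ∂P, Tendsto
      (fun k : ℕ => S (k ^ 2) ω / (2 * ((k ^ 2 : ℕ) : ℝ) + 1)) atTop (nhds 0) := by
    filter_upwards [key] with ω hgω
    rw [tendsto_zero_iff_norm_tendsto_zero]
    have h2 := (Real.continuous_sqrt.tendsto 0).comp hgω
    have heq : (fun k => Real.sqrt (g k ω)) =
        fun k => ‖S (k ^ 2) ω / (2 * ((k ^ 2 : ℕ) : ℝ) + 1)‖ := by
      funext k
      simp only [hg]
      rw [Real.sqrt_sq_eq_abs, Real.norm_eq_abs]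
    rw [← heq]
    simpa [Real.sqrt_zero, Function.comp_def] using h2
  -- gap filling
  filter_upwards [hsq] with ω hω
  have hgoal_eq : (fun N : ℕ => (1 / (2 * (N : ℝ) + 1)) *
      ∑ n ∈ Finset.Icc (-(N : ℤ)) (N : ℤ), (c n * (Y n ω * Y (n - m) ω) - c n * q ^ 2))
      = fun N : ℕ => S N ω / (2 * (N : ℝ) + 1) := by
    funext N
    simp only [hS]
    rw [one_div, inv_mul_eq_div]
  rw [hgoal_eq]
  have hcardN : ∀ M : ℕ, (Finset.Icc (-(M : ℤ)) (M : ℤ)).card = 2 * M + 1 := by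
    intro M; rw [Int.card_Icc]; omega
  have hb2 : ∀ N : ℕ, |S N ω| ≤ |S ((Nat.sqrt N) ^ 2) ω| + 8 * ((Nat.sqrt N : ℕ) : ℝ) := by
    intro N
    set k := Nat.sqrt N with hk
    have hk1 : k ^ 2 ≤ N := Nat.sqrt_le' N
    have hk2 : N ≤ k ^ 2 + 2 * k := by
      have h := Nat.lt_succ_sqrt' N
      have hexp : (Nat.succ k) ^ 2 = k ^ 2 + 2 * k + 1 := by
        rw [Nat.succ_eq_add_one]; ring
      rw [hexp] at h
      exact Nat.lt_succ_iff.mp h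
    have hk1' : ((k ^ 2 : ℕ) : ℤ) ≤ (N : ℤ) := by exact_mod_cast hk1
    have hsubset : Finset.Icc (-((k ^ 2 : ℕ) : ℤ)) ((k ^ 2 : ℕ) : ℤ)
        ⊆ Finset.Icc (-(N : ℤ)) (N : ℤ) :=
      Finset.Icc_subset_Icc (neg_le_neg hk1') hk1'
    have hsplit := Finset.sum_sdiff (f := fun n => V n ω) hsubset
    have hcarddiff : ((Finset.Icc (-(N : ℤ)) (N : ℤ)
        \ Finset.Icc (-((k ^ 2 : ℕ) : ℤ)) ((k ^ 2 : ℕ) : ℤ)).card : ℝ) ≤ 4 * (k : ℝ) := by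
      rw [Finset.card_sdiff_of_subset hsubset, hcardN, hcardN]
      have : 2 * N + 1 - (2 * k ^ 2 + 1) ≤ 4 * k := by omega
      calc ((2 * N + 1 - (2 * k ^ 2 + 1) : ℕ) : ℝ) ≤ ((4 * k : ℕ) : ℝ) := by exact_mod_cast this
        _ = 4 * (k : ℝ) := by push_cast; ring
    have hdiffb : |∑ n ∈ Finset.Icc (-(N : ℤ)) (N : ℤ)
        \ Finset.Icc (-((k ^ 2 : ℕ) : ℤ)) ((k ^ 2 : ℕ) : ℤ), V n ω| ≤ 8 * (k : ℝ) := by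
      calc |∑ n ∈ _, V n ω| ≤ ∑ n ∈ Finset.Icc (-(N : ℤ)) (N : ℤ)
            \ Finset.Icc (-((k ^ 2 : ℕ) : ℤ)) ((k ^ 2 : ℕ) : ℤ), |V n ω| :=
            Finset.abs_sum_le_sum_abs _ _
        _ ≤ ∑ n ∈ Finset.Icc (-(N : ℤ)) (N : ℤ)
            \ Finset.Icc (-((k ^ 2 : ℕ) : ℤ)) ((k ^ 2 : ℕ) : ℤ), 2 :=
            Finset.sum_le_sum fun n _ => hVb n ω
        _ ≤ 8 * (k : ℝ) := by
            rw [Finset.sum_const, nsmul_eq_mul]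
            nlinarith [hcarddiff]
    calc |S N ω| = |(∑ n ∈ Finset.Icc (-(N : ℤ)) (N : ℤ)
          \ Finset.Icc (-((k ^ 2 : ℕ) : ℤ)) ((k ^ 2 : ℕ) : ℤ), V n ω) + S (k ^ 2) ω| := by
          simp only [hS]
          rw [← hsplit]
      _ ≤ |∑ n ∈ Finset.Icc (-(N : ℤ)) (N : ℤ)
          \ Finset.Icc (-((k ^ 2 : ℕ) : ℤ)) ((k ^ 2 : ℕ) : ℤ), V n ω| + |S (k ^ 2) ω| :=
          abs_add_le _ _
      _ ≤ |S (k ^ 2) ω| + 8 * (k : ℝ) := by linarith [hdiffb]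
  have hbound : ∀ N : ℕ, ‖S N ω / (2 * (N : ℝ) + 1)‖ ≤
      |S ((Nat.sqrt N) ^ 2) ω| / (2 * (((Nat.sqrt N) ^ 2 : ℕ) : ℝ) + 1)
      + 8 * ((Nat.sqrt N : ℕ) : ℝ) / (2 * (((Nat.sqrt N) ^ 2 : ℕ) : ℝ) + 1) := by
    intro N
    set k := Nat.sqrt N with hk
    rw [Real.norm_eq_abs, abs_div, abs_of_pos (hd N), ← add_div]
    apply div_le_div₀ (by positivity) (hb2 N) (hd (k ^ 2))
    have : (k ^ 2 : ℕ) ≤ N := Nat.sqrt_le' N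
    have : ((k ^ 2 : ℕ) : ℝ) ≤ (N : ℝ) := by exact_mod_cast this
    linarith
  have hlim : Tendsto (fun k : ℕ => |S (k ^ 2) ω| / (2 * ((k ^ 2 : ℕ) : ℝ) + 1)
      + 8 * (k : ℝ) / (2 * ((k ^ 2 : ℕ) : ℝ) + 1)) atTop (nhds 0) := by
    have t1 : Tendsto (fun k : ℕ => |S (k ^ 2) ω| / (2 * ((k ^ 2 : ℕ) : ℝ) + 1))
        atTop (nhds 0) := by
      have h := hω.abs
      have heq : (fun k : ℕ => |S (k ^ 2) ω / (2 * ((k ^ 2 : ℕ) : ℝ) + 1)|)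
          = fun k : ℕ => |S (k ^ 2) ω| / (2 * ((k ^ 2 : ℕ) : ℝ) + 1) := by
        funext k
        rw [abs_div, abs_of_pos (hd (k ^ 2))]
      rw [heq] at h
      simpa using h
    have t2 : Tendsto (fun k : ℕ => 8 * (k : ℝ) / (2 * ((k ^ 2 : ℕ) : ℝ) + 1))
        atTop (nhds 0) := by
      have hle : ∀ k : ℕ, 8 * (k : ℝ) / (2 * ((k ^ 2 : ℕ) : ℝ) + 1) ≤ 8 / (k : ℝ) := by
        intro k
        rcases Nat.eq_zero_or_pos k with hk0 | hkp
        · subst hk0; simp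
        · have hkr : (0:ℝ) < (k : ℝ) := by exact_mod_cast hkp
          rw [div_le_div_iff₀ (hd (k ^ 2)) hkr]
          push_cast
          nlinarith
      exact squeeze_zero' (Eventually.of_forall fun k => by positivity)
        (Eventually.of_forall hle) (tendsto_const_div_atTop_nhds_zero_nat 8)
    simpa using t1.add t2
  have hcomp := hlim.comp sqrt_tendsto_atTop
  rw [tendsto_zero_iff_norm_tendsto_zero]
  exact squeeze_zero (fun N => norm_nonneg _) hbound hcomp

private lemma card_Icc_real (N : ℕ) :
    ((Finset.Icc (-(N : ℤ)) (N : ℤ)).card : ℝ) = 2 * (N : ℝ) + 1 := by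
  have h : (Finset.Icc (-(N : ℤ)) (N : ℤ)).card = 2 * N + 1 := by
    rw [Int.card_Icc]; omega
  rw [h]; push_cast; ring

/-- Bernoullisation: if the deterministic autocorrelation of `w` is the Kronecker
delta, then almost surely the autocorrelation of the Bernoullised comb
`n ↦ w(n) X(n)` is again the Kronecker delta, independently of `p`. -/
theorem bernoullisation_homometric
    {Ω : Type*} [MeasurableSpace Ω] (P : Measure Ω) [IsProbabilityMeasure P]
    (p : ℝ) (hp0 : 0 ≤ p) (hp1 : p ≤ 1)
    (w : ℤ → ℝ) (hw : ∀ n, w n = 1 ∨ w n = -1)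
    (X : ℤ → Ω → ℝ)
    (hmeas : ∀ n, Measurable (X n))
    (hindep : iIndepFun X P)
    (hval : ∀ n, ∀ᵐ ω ∂P, X n ω = 1 ∨ X n ω = -1)
    (hdist : ∀ n, P {ω | X n ω = 1} = ENNReal.ofReal p)
    (hdist' : ∀ n, P {ω | X n ω = -1} = ENNReal.ofReal (1 - p))
    (hauto : ∀ m : ℤ,
      Tendsto
        (fun N : ℕ => (1 / (2 * (N : ℝ) + 1)) *
          ∑ n ∈ Finset.Icc (-(N : ℤ)) (N : ℤ), w n * w (n - m))
        atTop (nhds (if m = 0 then 1 else 0))) :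
    ∀ᵐ ω ∂P, ∀ m : ℤ,
      Tendsto
        (fun N : ℕ => (1 / (2 * (N : ℝ) + 1)) *
          ∑ n ∈ Finset.Icc (-(N : ℤ)) (N : ℤ),
            (w n * X n ω) * (w (n - m) * X (n - m) ω))
        atTop (nhds (if m = 0 then 1 else 0)) := by
  classical
  set gsgn : ℝ → ℝ := fun x => if x = 1 then 1 else -1 with hgsgn
  have hgm : Measurable gsgn :=
    Measurable.ite measurableSet_eq measurable_const measurable_const
  set Y : ℤ → Ω → ℝ := fun n ω => gsgn (X n ω) with hYdef
  have hYmeas : ∀ n, Measurable (Y n) := fun n => hgm.comp (hmeas n)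
  have hYindep : iIndepFun Y P :=
    hindep.comp (fun _ => gsgn) (fun _ => hgm)
  have hYval : ∀ n ω, Y n ω = 1 ∨ Y n ω = -1 := by
    intro n ω
    simp only [hYdef, hgsgn]
    split <;> simp
  have hXY : ∀ᵐ ω ∂P, ∀ n : ℤ, X n ω = Y n ω := by
    rw [ae_all_iff]
    intro n
    filter_upwards [hval n] with ω h
    rcases h with h | h <;> simp [hYdef, hgsgn, h] <;> norm_num
  have hYmean : ∀ n, ∫ ω, Y n ω ∂P = 2 * p - 1 := by
    intro n
    have hA : MeasurableSet {ω | X n ω = 1} := hmeas n (measurableSet_singleton 1)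
    have heq : (fun ω => Y n ω) =
        fun ω => Set.indicator {ω | X n ω = 1} (fun _ => (2:ℝ)) ω - 1 := by
      funext ω
      by_cases h : X n ω = 1
      · simp [hYdef, hgsgn, h, Set.indicator_apply, Set.mem_setOf_eq]
        norm_num
      · simp [hYdef, hgsgn, h, Set.indicator_apply, Set.mem_setOf_eq]
    calc ∫ ω, Y n ω ∂P
        = ∫ ω, (Set.indicator {ω | X n ω = 1} (fun _ => (2:ℝ)) ω - 1) ∂P := by rw [heq]
      _ = (∫ ω, Set.indicator {ω | X n ω = 1} (fun _ => (2:ℝ)) ω ∂P) - ∫ _ω, (1:ℝ) ∂P :=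
          integral_sub ((integrable_const (2:ℝ)).indicator hA) (integrable_const 1)
      _ = 2 * p - 1 := by
          rw [integral_indicator_const _ hA, integral_const, measureReal_def, hdist n]
          simp [ENNReal.toReal_ofReal hp0]
          ring
  have hq : |2 * p - 1| ≤ 1 := abs_le.mpr ⟨by linarith, by linarith⟩
  have main : ∀ᵐ ω ∂P, ∀ m : ℤ,
      Tendsto
        (fun N : ℕ => (1 / (2 * (N : ℝ) + 1)) *
          ∑ n ∈ Finset.Icc (-(N : ℤ)) (N : ℤ),
            (w n * Y n ω) * (w (n - m) * Y (n - m) ω))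
        atTop (nhds (if m = 0 then 1 else 0)) := by
    rw [ae_all_iff]
    intro m
    by_cases hm : m = 0
    · subst hm
      apply ae_of_all
      intro ω
      have hval1 : ∀ N : ℕ, (1 / (2 * (N : ℝ) + 1)) *
          ∑ n ∈ Finset.Icc (-(N : ℤ)) (N : ℤ),
            (w n * Y n ω) * (w (n - 0) * Y (n - 0) ω) = 1 := by
        intro N
        have hsummand : ∀ n ∈ Finset.Icc (-(N : ℤ)) (N : ℤ),
            (w n * Y n ω) * (w (n - 0) * Y (n - 0) ω) = 1 := by
          intro n _
          rw [sub_zero]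
          rcases hw n with h | h <;> rcases hYval n ω with h' | h' <;>
            rw [h, h'] <;> norm_num
        rw [Finset.sum_congr rfl hsummand, Finset.sum_const, nsmul_eq_mul, card_Icc_real]
        have := (by positivity : (0:ℝ) < 2 * (N : ℝ) + 1)
        field_simp
      simp only [if_pos rfl]
      have heqf : (fun N : ℕ => (1 / (2 * (N : ℝ) + 1)) *
          ∑ n ∈ Finset.Icc (-(N : ℤ)) (N : ℤ),
            (w n * Y n ω) * (w (n - 0) * Y (n - 0) ω)) = fun _ => (1:ℝ) := funext hval1
      rw [heqf]
      exact tendsto_const_nhds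
    · have hcw : ∀ n, |w n * w (n - m)| ≤ 1 := fun n => by
        rcases hw n with h | h <;> rcases hw (n - m) with h' | h' <;>
          rw [h, h'] <;> norm_num
      have hR := aux_main P (2 * p - 1) hq Y hYmeas hYindep hYval hYmean
        (fun n => w n * w (n - m)) hcw m hm
      filter_upwards [hR] with ω hRω
      have hD : Tendsto (fun N : ℕ => (2 * p - 1) ^ 2 *
          ((1 / (2 * (N : ℝ) + 1)) *
            ∑ n ∈ Finset.Icc (-(N : ℤ)) (N : ℤ), w n * w (n - m)))
          atTop (nhds ((2 * p - 1) ^ 2 * 0)) := by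
        apply Tendsto.const_mul
        have h := hauto m
        rwa [if_neg hm] at h
      have hsumid : ∀ N : ℕ, (1 / (2 * (N : ℝ) + 1)) *
          ∑ n ∈ Finset.Icc (-(N : ℤ)) (N : ℤ),
            (w n * Y n ω) * (w (n - m) * Y (n - m) ω)
          = ((1 / (2 * (N : ℝ) + 1)) *
              ∑ n ∈ Finset.Icc (-(N : ℤ)) (N : ℤ),
                ((w n * w (n - m)) * (Y n ω * Y (n - m) ω)
                  - (w n * w (n - m)) * (2 * p - 1) ^ 2))
            + (2 * p - 1) ^ 2 * ((1 / (2 * (N : ℝ) + 1)) *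
              ∑ n ∈ Finset.Icc (-(N : ℤ)) (N : ℤ), w n * w (n - m)) := by
        intro N
        have h1 : ∑ n ∈ Finset.Icc (-(N : ℤ)) (N : ℤ),
            (w n * Y n ω) * (w (n - m) * Y (n - m) ω)
            = ∑ n ∈ Finset.Icc (-(N : ℤ)) (N : ℤ),
              (w n * w (n - m)) * (Y n ω * Y (n - m) ω) :=
          Finset.sum_congr rfl fun n _ => by ring
        rw [h1, Finset.sum_sub_distrib, ← Finset.sum_mul]
        ring
      rw [if_neg hm]
      have heqf : (fun N : ℕ => (1 / (2 * (N : ℝ) + 1)) *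
          ∑ n ∈ Finset.Icc (-(N : ℤ)) (N : ℤ),
            (w n * Y n ω) * (w (n - m) * Y (n - m) ω)) = fun N : ℕ =>
          ((1 / (2 * (N : ℝ) + 1)) *
              ∑ n ∈ Finset.Icc (-(N : ℤ)) (N : ℤ),
                ((w n * w (n - m)) * (Y n ω * Y (n - m) ω)
                  - (w n * w (n - m)) * (2 * p - 1) ^ 2))
            + (2 * p - 1) ^ 2 * ((1 / (2 * (N : ℝ) + 1)) *
              ∑ n ∈ Finset.Icc (-(N : ℤ)) (N : ℤ), w n * w (n - m)) := funext hsumid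
      rw [heqf]
      simpa using hRω.add hD
  filter_upwards [hXY, main] with ω h1 h2
  intro m
  have heq : (fun N : ℕ => (1 / (2 * (N : ℝ) + 1)) *
      ∑ n ∈ Finset.Icc (-(N : ℤ)) (N : ℤ),
        (w n * X n ω) * (w (n - m) * X (n - m) ω)) = fun N : ℕ =>
      (1 / (2 * (N : ℝ) + 1)) *
        ∑ n ∈ Finset.Icc (-(N : ℤ)) (N : ℤ),
          (w n * Y n ω) * (w (n - m) * Y (n - m) ω) := by
    funext N
    congr 1
    exact Finset.sum_congr rfl fun n _ => by rw [h1 n, h1 (n - m)]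
  rw [heq]
  exact h2 m
end
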